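/- Let λ*_α denote the minimizer of λ ↦ E[((R-λ)_+)² + exp(2α)·((R-λ)_-)²] for a bounded random variable R with nondegenerate distribution. Then λ*_α is nonincreasing in α, and λ*_0 = E[R]. -/

import Mathlib

open MeasureTheory

lemma sqDecomp (u : ℝ) : (max u 0)^2 + (min u 0)^2 = u^2 := by
  rcases le_total u 0 with h | h
  · rw [max_eq_right h, min_eq_left h]; ring
  · rw [max_eq_left h, min_eq_right h]; ring

lemma ptmid (x a b k : ℝ) (hk : 1 ≤ k) :
    (max (x - (a+b)/2) 0)^2 + k * (min (x - (a+b)/2) 0)^2 + (b-a)^2/4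
    ≤ (((max (x-a) 0)^2 + k * (min (x-a) 0)^2)
      + ((max (x-b) 0)^2 + k * (min (x-b) 0)^2))/2 := by
  have ka := sqDecomp (x - a)
  have kb := sqDecomp (x - b)
  have kt := sqDecomp (x - (a+b)/2)
  set u := min (x-a) 0 with hu
  set v := min (x-b) 0 with hv
  set w := min (x-(a+b)/2) 0 with hw
  have hu0 : u ≤ 0 := min_le_right _ _
  have hv0 : v ≤ 0 := min_le_right _ _
  have hw0 : w ≤ 0 := min_le_right _ _
  have hua : u ≤ x - a := min_le_left _ _
  have hvb : v ≤ x - b := min_le_left _ _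
  have hwm : (u + v)/2 ≤ w := by
    apply le_min
    · linarith
    · linarith
  have h2 : 2 * w^2 ≤ u^2 + v^2 := by
    nlinarith [mul_nonneg (by linarith : (0:ℝ) ≤ 2*w - (u+v))
      (by linarith : (0:ℝ) ≤ -(u+v) - 2*w), sq_nonneg (u - v)]
  nlinarith [mul_nonneg (by linarith : (0:ℝ) ≤ k - 1)
    (by linarith : (0:ℝ) ≤ u^2 + v^2 - 2*w^2)]

noncomputable def Floss {Ω : Type*} [MeasurableSpace Ω] (μ : Measure Ω)
    (R : Ω → ℝ) (k l : ℝ) : ℝ :=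
  ∫ ω, ((max (R ω - l) 0) ^ 2 + k * (min (R ω - l) 0) ^ 2) ∂μ

/-- The minimizer `λ*_α` of the asymmetric squared loss is nonincreasing in
`α`, and at `α = 0` it equals the mean `E[R]`. -/
theorem stmt9 {Ω : Type*} [MeasurableSpace Ω] (μ : Measure Ω)
    [IsProbabilityMeasure μ] (R : Ω → ℝ) (hR : Measurable R)
    (M : ℝ) (hbdd : ∀ ω, |R ω| ≤ M)
    (hnd : ¬ ∀ᵐ ω ∂μ, R ω = ∫ x, R x ∂μ)
    (lamStar : ℝ → ℝ)
    (hmin : ∀ α ∈ Set.Ici (0 : ℝ), ∀ l : ℝ,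
      (∫ ω, ((max (R ω - lamStar α) 0) ^ 2 +
        Real.exp (2 * α) * (min (R ω - lamStar α) 0) ^ 2) ∂μ) ≤
      ∫ ω, ((max (R ω - l) 0) ^ 2 +
        Real.exp (2 * α) * (min (R ω - l) 0) ^ 2) ∂μ) :
    AntitoneOn lamStar (Set.Ici 0) ∧ lamStar 0 = ∫ ω, R ω ∂μ := by
  -- basic integrability facts
  have hRint : Integrable R μ := by
    refine Integrable.mono' (integrable_const M) hR.aestronglyMeasurable ?_
    filter_upwards with ω
    simpa [Real.norm_eq_abs] using hbdd ω
  have habs : ∀ (l : ℝ) (ω : Ω), |R ω - l| ≤ M + |l| := by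
    intro l ω
    have h1 := abs_le.mp (hbdd ω)
    have h2 := le_abs_self l
    have h3 := neg_abs_le l
    rw [abs_le]; constructor <;> linarith
  have hPint : ∀ l : ℝ, Integrable (fun ω => (max (R ω - l) 0)^2) μ := by
    intro l
    refine Integrable.mono' (integrable_const ((M+|l|)^2))
      (((hR.sub measurable_const).max measurable_const).pow_const 2).aestronglyMeasurable ?_
    filter_upwards with ω
    have h1 := abs_le.mp (habs l ω)
    have h4 : (0:ℝ) ≤ M + |l| := (abs_nonneg _).trans (habs l ω)
    have h2 : max (R ω - l) 0 ≤ M + |l| := max_le (by linarith) h4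
    have h3 : (0:ℝ) ≤ max (R ω - l) 0 := le_max_right _ _
    rw [Real.norm_eq_abs, abs_of_nonneg (by positivity)]
    nlinarith
  have hNint : ∀ l : ℝ, Integrable (fun ω => (min (R ω - l) 0)^2) μ := by
    intro l
    refine Integrable.mono' (integrable_const ((M+|l|)^2))
      (((hR.sub measurable_const).min measurable_const).pow_const 2).aestronglyMeasurable ?_
    filter_upwards with ω
    have h1 := abs_le.mp (habs l ω)
    have h2 : -(M + |l|) ≤ min (R ω - l) 0 := le_min (by linarith)
      (by have := (abs_nonneg (R ω - l)).trans (habs l ω); linarith)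
    have h3 : min (R ω - l) 0 ≤ 0 := min_le_right _ _
    rw [Real.norm_eq_abs, abs_of_nonneg (by positivity)]
    nlinarith
  have hFint : ∀ (k l : ℝ),
      Integrable (fun ω => (max (R ω - l) 0)^2 + k * (min (R ω - l) 0)^2) μ :=
    fun k l => (hPint l).add ((hNint l).const_mul k)
  have hmin' : ∀ α : ℝ, 0 ≤ α → ∀ l : ℝ,
      Floss μ R (Real.exp (2*α)) (lamStar α) ≤ Floss μ R (Real.exp (2*α)) l := by
    intro α hα l
    simpa [Floss] using hmin α hα l
  -- the strong minimality inequality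
  have star : ∀ α : ℝ, 0 ≤ α → ∀ b : ℝ,
      Floss μ R (Real.exp (2*α)) (lamStar α) + (b - lamStar α)^2/2
        ≤ Floss μ R (Real.exp (2*α)) b := by
    intro α hα b
    set k := Real.exp (2*α) with hkdef
    set a := lamStar α with hadef
    have hk : 1 ≤ k := Real.one_le_exp (by linarith)
    have h1 : Floss μ R k ((a+b)/2)
        ≤ (Floss μ R k a + Floss μ R k b)/2 - (b-a)^2/4 := by
      have hle : ∀ ω, (max (R ω - (a+b)/2) 0)^2 + k * (min (R ω - (a+b)/2) 0)^2
          ≤ (((max (R ω - a) 0)^2 + k * (min (R ω - a) 0)^2)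
            + ((max (R ω - b) 0)^2 + k * (min (R ω - b) 0)^2))/2 - (b-a)^2/4 := by
        intro ω
        have := ptmid (R ω) a b k hk
        linarith
      calc Floss μ R k ((a+b)/2)
          ≤ ∫ ω, ((((max (R ω - a) 0)^2 + k * (min (R ω - a) 0)^2)
            + ((max (R ω - b) 0)^2 + k * (min (R ω - b) 0)^2))/2 - (b-a)^2/4) ∂μ := by
            exact integral_mono (hFint k _) ((((hFint k a).add (hFint k b)).div_const 2).sub
              (integrable_const _)) hle
        _ = (Floss μ R k a + Floss μ R k b)/2 - (b-a)^2/4 := by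
            have hAB : Integrable (fun ω => (((max (R ω - a) 0)^2 + k * (min (R ω - a) 0)^2)
                + ((max (R ω - b) 0)^2 + k * (min (R ω - b) 0)^2))/2) μ :=
              ((hFint k a).add (hFint k b)).div_const 2
            rw [integral_sub hAB (integrable_const _)]
            have hAB2 : (∫ ω, ((((max (R ω - a) 0)^2 + k * (min (R ω - a) 0)^2)
                + ((max (R ω - b) 0)^2 + k * (min (R ω - b) 0)^2))/2) ∂μ)
                = (Floss μ R k a + Floss μ R k b)/2 := by
              rw [integral_div]
              have hadd : (∫ ω, (((max (R ω - a) 0)^2 + k * (min (R ω - a) 0)^2)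
                  + ((max (R ω - b) 0)^2 + k * (min (R ω - b) 0)^2)) ∂μ)
                  = Floss μ R k a + Floss μ R k b := integral_add (hFint k a) (hFint k b)
              rw [hadd]
            rw [hAB2, integral_const]
            simp
    have h2 := hmin' α hα ((a+b)/2)
    linarith
  constructor
  · -- antitone
    intro α hα β hβ hαβ
    simp only [Set.mem_Ici] at hα hβ
    set a := lamStar α with hadef
    set b := lamStar β with hbdef
    by_contra hcon
    push_neg at hcon
    have hab : a < b := hcon
    have hc : 0 ≤ Real.exp (2*β) - Real.exp (2*α) :=
      sub_nonneg.2 (Real.exp_le_exp.mpr (by linarith))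
    have hrel : ∀ l : ℝ, Floss μ R (Real.exp (2*β)) l
        = Floss μ R (Real.exp (2*α)) l
          + (Real.exp (2*β) - Real.exp (2*α)) * ∫ ω, (min (R ω - l) 0)^2 ∂μ := by
      intro l
      simp only [Floss]
      rw [← integral_const_mul, ← integral_add (hFint _ l) ((hNint l).const_mul _)]
      exact integral_congr_ae (Filter.Eventually.of_forall fun ω => by ring)
    have hG : (∫ ω, (min (R ω - a) 0)^2 ∂μ) ≤ ∫ ω, (min (R ω - b) 0)^2 ∂μ := by
      refine integral_mono (hNint a) (hNint b) fun ω => ?_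
      have h1 : min (R ω - b) 0 ≤ min (R ω - a) 0 :=
        min_le_min (by linarith) le_rfl
      have h2 : min (R ω - a) 0 ≤ 0 := min_le_right _ _
      nlinarith
    have s1 := star α hα b
    have s2 := star β hβ a
    rw [hrel a, hrel b] at s2
    nlinarith [mul_nonneg hc (sub_nonneg.2 hG), mul_pos (sub_pos.2 hab) (sub_pos.2 hab)]
  · -- value at 0
    set m := ∫ ω, R ω ∂μ with hmdef
    set a := lamStar 0 with hadef
    have hk0 : Real.exp (2*(0:ℝ)) = 1 := by norm_num
    have hdiff : Floss μ R 1 m - Floss μ R 1 a = -((a - m)^2) := by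
      simp only [Floss]
      rw [← integral_sub (hFint 1 m) (hFint 1 a)]
      have heq : (fun ω => ((max (R ω - m) 0)^2 + 1 * (min (R ω - m) 0)^2)
          - ((max (R ω - a) 0)^2 + 1 * (min (R ω - a) 0)^2))
          = fun ω => (a - m) * (2 * R ω) + (m^2 - a^2) := by
        funext ω
        have d1 := sqDecomp (R ω - m)
        have d2 := sqDecomp (R ω - a)
        nlinarith [d1, d2]
      have hint1 : Integrable (fun ω => (a - m) * (2 * R ω)) μ :=
        (hRint.const_mul 2).const_mul (a-m)
      rw [heq, integral_add hint1 (integrable_const _), integral_const_mul,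
        integral_const_mul, integral_const]
      simp only [measure_univ, probReal_univ, ENNReal.toReal_one, smul_eq_mul, one_mul]
      rw [← hmdef]
      ring
    have s := star 0 le_rfl m
    rw [hk0] at s
    have h0 : (a - m)^2 = 0 := le_antisymm (by nlinarith) (sq_nonneg _)
    have := pow_eq_zero_iff (n := 2) (by norm_num) |>.mp h0
    linarith [sub_eq_zero.mp this]
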